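/- There is no G(K₄)-adapted spanning tree of the complete graph K₄: no spanning tree t of K₄ has the property that E(t) ∩ E(g) is a spanning tree of g for every saturated subgraph g of K₄. In fact, no spanning tree of K₄ simultaneously induces spanning trees of all four triangle (K₃) subgraphs. -/

import Mathlib

private lemma stmt7_dec1 : ∀ e : Sym2 (Fin 4), ¬ e.IsDiag →
    ((Finset.powersetCard 3 (Finset.univ : Finset (Fin 4))).filter
      (fun S => ∀ v ∈ e, v ∈ S)).card = 2 := by decide

private lemma stmt7_dec2 : ∀ S : Finset (Fin 4), S.card = 3 →
    ((Finset.univ : Finset (Sym2 (Fin 4))).filter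
      (fun e => ¬ e.IsDiag ∧ ∀ v ∈ e, v ∈ S)).card = 3 := by decide

attribute [local instance] Classical.propDecidable

namespace Stmt7

/-- The complete graph `K₄`. -/
noncomputable def EK4 : Finset (Sym2 (Fin 4)) := (⊤ : SimpleGraph (Fin 4)).edgeFinset

/-- `s` is a spanning forest of the subgraph with edge set `g`: `s ⊆ g`, `s` is acyclic,
and `s` connects everything that `g` connects (same connected components). -/
def SpForest (s g : Finset (Sym2 (Fin 4))) : Prop :=
  s ⊆ g ∧ (SimpleGraph.fromEdgeSet ((s : Set (Sym2 (Fin 4))))).IsAcyclic ∧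
    ∀ v w : Fin 4, (SimpleGraph.fromEdgeSet ((g : Set (Sym2 (Fin 4))))).Reachable v w →
      (SimpleGraph.fromEdgeSet ((s : Set (Sym2 (Fin 4))))).Reachable v w

/-- A subgraph of `K₄` is saturated if it contains every edge of `K₄` whose endpoints
are already connected in it. -/
def Saturated (g : Finset (Sym2 (Fin 4))) : Prop :=
  g ⊆ EK4 ∧ ∀ v w : Fin 4, v ≠ w →
    (SimpleGraph.fromEdgeSet ((g : Set (Sym2 (Fin 4))))).Reachable v w → s(v, w) ∈ g

/-- The edges of `K₄` lying inside a vertex set `S` (for `|S| = 3`, a triangle). -/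
noncomputable def triEdges (S : Finset (Fin 4)) : Finset (Sym2 (Fin 4)) :=
  EK4.filter (fun e => ∀ v ∈ e, v ∈ S)

lemma mem_EK4 {e : Sym2 (Fin 4)} : e ∈ EK4 ↔ ¬ e.IsDiag := by
  simp [EK4, SimpleGraph.mem_edgeFinset, SimpleGraph.edgeSet_top]

lemma mem_triEdges {S : Finset (Fin 4)} {e : Sym2 (Fin 4)} :
    e ∈ triEdges S ↔ ¬ e.IsDiag ∧ ∀ v ∈ e, v ∈ S := by
  simp [triEdges, Finset.mem_filter, mem_EK4]

lemma reach_exists_edge {s : Finset (Sym2 (Fin 4))} {v w : Fin 4}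
    (h : (SimpleGraph.fromEdgeSet ((s : Set (Sym2 (Fin 4))))).Reachable v w) :
    v = w ∨ ∃ u, s(v, u) ∈ s := by
  obtain ⟨p⟩ := h
  cases p with
  | nil => exact Or.inl rfl
  | @cons _ x _ h p =>
    exact Or.inr ⟨x, by simpa using ((SimpleGraph.fromEdgeSet_adj _).mp h).1⟩

lemma card_triEdges {S : Finset (Fin 4)} (hS : S.card = 3) : (triEdges S).card = 3 := by
  have heq : triEdges S = (Finset.univ : Finset (Sym2 (Fin 4))).filter
      (fun e => ¬ e.IsDiag ∧ ∀ v ∈ e, v ∈ S) := by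
    ext e
    simp [mem_triEdges]
  rw [heq]
  have := stmt7_dec2 S hS
  convert this using 2

lemma adj_triEdges {S : Finset (Fin 4)} {x y : Fin 4} (hxy : x ≠ y) (hx : x ∈ S) (hy : y ∈ S) :
    (SimpleGraph.fromEdgeSet ((triEdges S : Set (Sym2 (Fin 4))))).Adj x y := by
  rw [SimpleGraph.fromEdgeSet_adj]
  refine ⟨?_, hxy⟩
  simp only [Finset.mem_coe]
  refine mem_triEdges.mpr ⟨by simp [hxy], ?_⟩
  intro v hv
  rcases Sym2.mem_iff.mp hv with rfl | rfl <;> assumption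

lemma tri_saturated {S : Finset (Fin 4)} : Saturated (triEdges S) := by
  refine ⟨Finset.filter_subset _ _, ?_⟩
  intro v w hvw hr
  have hv : v ∈ S := by
    rcases reach_exists_edge hr with h | ⟨u, hu⟩
    · exact absurd h hvw
    · exact (mem_triEdges.mp hu).2 v (by simp)
  have hw : w ∈ S := by
    rcases reach_exists_edge hr.symm with h | ⟨u, hu⟩
    · exact absurd h.symm hvw
    · exact (mem_triEdges.mp hu).2 w (by simp)
  refine mem_triEdges.mpr ⟨by simp [hvw], ?_⟩
  intro v hv'
  rcases Sym2.mem_iff.mp hv' with rfl | rfl <;> assumption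

lemma card_eq_two {t : Finset (Sym2 (Fin 4))} {S : Finset (Fin 4)} (hS : S.card = 3)
    (hsp : SpForest (t ∩ triEdges S) (triEdges S)) : (t ∩ triEdges S).card = 2 := by
  obtain ⟨hsub, hacyc, hreach⟩ := hsp
  obtain ⟨a, b, c, hab, hac, hbc, rfl⟩ := Finset.card_eq_three.mp hS
  set s := t ∩ triEdges {a, b, c} with hsdef
  have ha : a ∈ ({a, b, c} : Finset (Fin 4)) := by simp
  have hb : b ∈ ({a, b, c} : Finset (Fin 4)) := by simp
  have hc : c ∈ ({a, b, c} : Finset (Fin 4)) := by simp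
  have h2le : 2 ≤ s.card := by
    by_contra h
    push_neg at h
    have hle : ∀ x ∈ s, ∀ y ∈ s, x = y := Finset.card_le_one.mp (by omega)
    have ra := hreach a b (adj_triEdges hab ha hb).reachable
    have rb := hreach b a (adj_triEdges (Ne.symm hab) hb ha).reachable
    have rc := hreach c a (adj_triEdges (fun h => hac h.symm) hc ha).reachable
    obtain ⟨ua, ha'⟩ := (reach_exists_edge ra).resolve_left hab
    obtain ⟨ub, hb'⟩ := (reach_exists_edge rb).resolve_left (Ne.symm hab)
    obtain ⟨uc, hc'⟩ := (reach_exists_edge rc).resolve_left (fun h => hac h.symm)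
    have e1 : s(a, ua) = s(b, ub) := hle _ ha' _ hb'
    have e2 : s(a, ua) = s(c, uc) := hle _ ha' _ hc'
    have hbmem : b ∈ s(a, ua) := by rw [e1]; simp
    have hcmem : c ∈ s(a, ua) := by rw [e2]; simp
    have hb2 : b = ua := (Sym2.mem_iff.mp hbmem).resolve_left (Ne.symm hab)
    have hc2 : c = ua := (Sym2.mem_iff.mp hcmem).resolve_left (fun h => hac h.symm)
    exact hbc (hb2.trans hc2.symm)
  have hub : s.card ≤ 3 := le_of_le_of_eq (Finset.card_le_card hsub) (card_triEdges hS)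
  have hne3 : s.card ≠ 3 := by
    intro h3'
    have hseq : s = triEdges {a, b, c} :=
      Finset.eq_of_subset_of_card_le hsub (by rw [h3', card_triEdges hS])
    rw [hseq] at hacyc
    rw [SimpleGraph.isAcyclic_iff_forall_adj_isBridge] at hacyc
    have hadj := adj_triEdges hab ha hb
    have hbridge := hacyc hadj
    rw [SimpleGraph.isBridge_iff] at hbridge
    apply hbridge
    have h1 : ((SimpleGraph.fromEdgeSet ((triEdges {a,b,c} : Set (Sym2 (Fin 4))))) \
        SimpleGraph.fromEdgeSet {s(a, b)}).Adj a c := by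
      rw [SimpleGraph.sdiff_adj]
      refine ⟨adj_triEdges hac ha hc, ?_⟩
      rw [SimpleGraph.fromEdgeSet_adj]
      rintro ⟨hmem, -⟩
      simp only [Set.mem_singleton_iff, Sym2.eq, Sym2.rel_iff', Prod.mk.injEq, Prod.swap_prod_mk] at hmem
      rcases hmem with ⟨-, h⟩ | ⟨h, -⟩
      · exact hbc h.symm
      · exact hab h
    have h2 : ((SimpleGraph.fromEdgeSet ((triEdges {a,b,c} : Set (Sym2 (Fin 4))))) \
        SimpleGraph.fromEdgeSet {s(a, b)}).Adj c b := by
      rw [SimpleGraph.sdiff_adj]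
      refine ⟨adj_triEdges (Ne.symm hbc) hc hb, ?_⟩
      rw [SimpleGraph.fromEdgeSet_adj]
      rintro ⟨hmem, -⟩
      simp only [Set.mem_singleton_iff, Sym2.eq, Sym2.rel_iff', Prod.mk.injEq, Prod.swap_prod_mk] at hmem
      rcases hmem with ⟨h, -⟩ | ⟨-, h⟩
      · exact hac h.symm
      · exact hab h.symm
    exact h1.reachable.trans h2.reachable
  omega

lemma key2 : ¬ ∃ t : Finset (Sym2 (Fin 4)),
    (SimpleGraph.fromEdgeSet ((t : Set (Sym2 (Fin 4))))).IsTree ∧ SpForest t EK4 ∧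
    ∀ S : Finset (Fin 4), S.card = 3 → (t ∩ triEdges S).card = 2 := by
  rintro ⟨t, htree, ⟨hsub, -, -⟩, hS⟩
  have hnd : ∀ e ∈ t, ¬ e.IsDiag := fun e he => mem_EK4.mp (hsub he)
  have hedge : (SimpleGraph.fromEdgeSet ((t : Set (Sym2 (Fin 4))))).edgeFinset = t := by
    apply Finset.coe_injective
    rw [SimpleGraph.coe_edgeFinset, SimpleGraph.edgeSet_fromEdgeSet]
    ext e
    simp only [Set.mem_diff, Finset.mem_coe, Set.mem_setOf_eq]
    exact ⟨fun h => h.1, fun h => ⟨h, hnd e h⟩⟩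
  have hcard : t.card = 3 := by
    have h := htree.card_edgeFinset
    rw [hedge] at h
    simpa using h
  have hsum : ∑ S ∈ Finset.powersetCard 3 (Finset.univ : Finset (Fin 4)),
      (t ∩ triEdges S).card = 8 := by
    rw [Finset.sum_congr rfl (fun S hSm => hS S (Finset.mem_powersetCard.mp hSm).2)]
    simp [Finset.card_powersetCard]
  have h1 : ∀ S, (t ∩ triEdges S) = t.filter (fun e => ∀ v ∈ e, v ∈ S) := by
    intro S
    ext e
    simp only [Finset.mem_inter, Finset.mem_filter, mem_triEdges]
    exact ⟨fun h => ⟨h.1, h.2.2⟩, fun h => ⟨h.1, hnd e h.1, h.2⟩⟩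
  have hsum2 : ∑ S ∈ Finset.powersetCard 3 (Finset.univ : Finset (Fin 4)),
      (t ∩ triEdges S).card = 6 := by
    calc ∑ S ∈ Finset.powersetCard 3 (Finset.univ : Finset (Fin 4)), (t ∩ triEdges S).card
        = ∑ S ∈ Finset.powersetCard 3 (Finset.univ : Finset (Fin 4)),
            ∑ e ∈ t, if (∀ v ∈ e, v ∈ S) then 1 else 0 := by
          refine Finset.sum_congr rfl fun S _ => ?_
          rw [h1 S, Finset.card_filter]
      _ = ∑ e ∈ t, ∑ S ∈ Finset.powersetCard 3 (Finset.univ : Finset (Fin 4)),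
            if (∀ v ∈ e, v ∈ S) then 1 else 0 := Finset.sum_comm
      _ = ∑ e ∈ t, 2 := by
          refine Finset.sum_congr rfl fun e he => ?_
          rw [← Finset.card_filter]
          have := stmt7_dec1 e (hnd e he)
          convert this using 2
      _ = 6 := by rw [Finset.sum_const, hcard, smul_eq_mul]
  omega

theorem no_adapted_spanning_tree_K4 :
    (¬ ∃ t : Finset (Sym2 (Fin 4)),
        (SimpleGraph.fromEdgeSet ((t : Set (Sym2 (Fin 4))))).IsTree ∧ SpForest t EK4 ∧
        ∀ g : Finset (Sym2 (Fin 4)), Saturated g → SpForest (t ∩ g) g) ∧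
    (¬ ∃ t : Finset (Sym2 (Fin 4)),
        (SimpleGraph.fromEdgeSet ((t : Set (Sym2 (Fin 4))))).IsTree ∧ SpForest t EK4 ∧
        ∀ S : Finset (Fin 4), S.card = 3 → (t ∩ triEdges S).card = 2) := by
  refine ⟨?_, key2⟩
  rintro ⟨t, htree, hsp, hall⟩
  exact key2 ⟨t, htree, hsp, fun S hS => card_eq_two hS (hall _ tri_saturated)⟩

end Stmt7
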